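/- For every k ≥ 2 and every time horizon T ≥ k that is a multiple of k, there exists an IMAB instance I = (f_1, …, f_k) (each f_i a reward function) such that OPT(I,T) ≥ (k²/2)·RR(I,T); i.e., the competitive ratio of the round-robin algorithm is at least k²/2. Concretely, the instance with f_1(n) = n/T for n ≤ T and f_1(n) = 1 for n > T, and f_i ≡ 0 for all i ≥ 2, witnesses this bound. -/

import Mathlib

open scoped Classical

/-- A reward function: bounded in [0,1], nondecreasing, with decreasing marginal returns. -/
def IsRewardFn (f : ℕ → ℝ) : Prop :=
  (∀ n, 0 ≤ f n) ∧ (∀ n, f n ≤ 1) ∧ Monotone f ∧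
    ∀ n, 1 ≤ n → f (n + 1) - f n ≤ f n - f (n - 1)

/-- Cumulative reward from pulling an arm with reward function `f` for `N` pulls. -/
noncomputable def Rew (f : ℕ → ℝ) (N : ℕ) : ℝ := ∑ n ∈ Finset.Icc 1 N, f n

/-- Offline optimum: the best total reward over all allocations of `T` pulls to the `k` arms. -/
noncomputable def OPT {k : ℕ} (f : Fin k → ℕ → ℝ) (T : ℕ) : ℝ :=
  sSup {x : ℝ | ∃ M : Fin k → ℕ, (∑ i, M i) = T ∧ x = ∑ i, Rew (f i) (M i)}

lemma gauss_Icc (m : ℕ) : ∑ n ∈ Finset.Icc 1 m, (n : ℝ) = m * (m + 1) / 2 := by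
  induction m with
  | zero => simp
  | succ m ih =>
    rw [Finset.sum_Icc_succ_top (by omega), ih]
    push_cast
    ring

/-- The competitive ratio of the round-robin algorithm is at least `k² / 2`: the concrete
instance with `f₁ n = n / T` for `n ≤ T` (and `1` afterwards) and all other arms
identically `0` witnesses `OPT(I,T) ≥ (k²/2) · RR(I,T)`. -/
theorem round_robin_lower_bound (k T : ℕ) (hk : 2 ≤ k) (hT : k ≤ T) (hdvd : k ∣ T) :
    ∃ f : Fin k → ℕ → ℝ,
      (f = fun i n => if i.val = 0 then (if n ≤ T then (n : ℝ) / T else 1) else 0) ∧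
      (∀ i, IsRewardFn (f i)) ∧
      ((k : ℝ) ^ 2 / 2) * (∑ i, Rew (f i) (T / k)) ≤ OPT f T := by
  haveI : NeZero k := ⟨by omega⟩
  have hT0 : (0 : ℝ) < T := by exact_mod_cast (by omega : 0 < T)
  set g : ℕ → ℝ := fun n => if n ≤ T then (n : ℝ) / T else 1 with hgdef
  set f : Fin k → ℕ → ℝ := fun i n => if i.val = 0 then g n else 0 with hfdef
  have hg0 : ∀ n, 0 ≤ g n := by
    intro n
    simp only [hgdef]
    split <;> positivity
  have hg1 : ∀ n, g n ≤ 1 := by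
    intro n
    simp only [hgdef]
    split
    · rw [div_le_one hT0]
      exact_mod_cast ‹n ≤ T›
    · exact le_refl 1
  have hgmono : Monotone g := by
    intro a b hab
    simp only [hgdef]
    by_cases hb : b ≤ T
    · rw [if_pos (hab.trans hb), if_pos hb]
      exact (div_le_div_iff_of_pos_right hT0).mpr (by exact_mod_cast hab)
    · rw [if_neg hb]
      split
      · rw [div_le_one hT0]; exact_mod_cast ‹a ≤ T›
      · exact le_refl 1
  have hgR : IsRewardFn g := by
    refine ⟨hg0, hg1, hgmono, ?_⟩
    intro n hn
    by_cases h1 : n + 1 ≤ T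
    · have h2 : n ≤ T := by omega
      have h3 : n - 1 ≤ T := by omega
      simp only [hgdef, if_pos h1, if_pos h2, if_pos h3]
      have hc : ((n - 1 : ℕ) : ℝ) = (n : ℝ) - 1 := by
        have : (1 : ℕ) ≤ n := hn
        push_cast [Nat.cast_sub this]
        ring
      rw [hc]
      push_cast
      have he : ((n:ℝ)+1)/T - n/T = n/T - ((n:ℝ)-1)/T := by ring
      linarith
    · by_cases h2 : n ≤ T
      · have hnT : n = T := by omega
        have hv1 : g (n + 1) = 1 := by simp only [hgdef]; rw [if_neg h1]
        have hvn : g n = 1 := by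
          simp only [hgdef]; rw [if_pos h2, hnT, div_self (ne_of_gt hT0)]
        rw [hv1, hvn]
        have := hg1 (n - 1)
        linarith
      · have hv1 : g (n + 1) = 1 := by simp only [hgdef]; rw [if_neg h1]
        have hvn : g n = 1 := by simp only [hgdef]; rw [if_neg h2]
        rw [hv1, hvn]
        have := hg1 (n - 1)
        linarith
  have hfR : ∀ i, IsRewardFn (f i) := by
    intro i
    by_cases hi : i.val = 0
    · simpa only [hfdef, hi, if_true] using hgR
    · simp only [hfdef, hi, if_false]
      exact ⟨fun n => le_refl 0, fun n => by norm_num, monotone_const, fun n _ => by norm_num⟩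
  refine ⟨f, by rw [hfdef, hgdef], hfR, ?_⟩
  -- the set defining OPT
  set S : Set ℝ := {x : ℝ | ∃ M : Fin k → ℕ, (∑ i, M i) = T ∧ x = ∑ i, Rew (f i) (M i)}
    with hSdef
  have hRewle : ∀ (i : Fin k) (N : ℕ), Rew (f i) N ≤ N := by
    intro i N
    calc Rew (f i) N ≤ ∑ n ∈ Finset.Icc 1 N, (1 : ℝ) :=
          Finset.sum_le_sum fun n _ => (hfR i).2.1 n
      _ = N := by simp [Nat.card_Icc]
  have hbdd : BddAbove S := by
    refine ⟨T, ?_⟩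
    rintro x ⟨M, hM, rfl⟩
    calc ∑ i, Rew (f i) (M i) ≤ ∑ i, (M i : ℝ) :=
          Finset.sum_le_sum fun i _ => hRewle i (M i)
      _ = T := by rw [← Nat.cast_sum, hM]
  -- Rew of arm 0 up to N ≤ T
  have hRewg : ∀ N : ℕ, N ≤ T → Rew g N = (N * (N + 1) / 2) / T := by
    intro N hN
    rw [Rew, ← gauss_Icc, Finset.sum_div]
    refine Finset.sum_congr rfl fun n hn => ?_
    have hn' := Finset.mem_Icc.mp hn
    simp only [hgdef]
    rw [if_pos (hn'.2.trans hN)]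
  have hfsum : ∀ N : ℕ, (∑ i, Rew (f i) N) = Rew g N := by
    intro N
    rw [Fintype.sum_eq_single (0 : Fin k)]
    · simp only [hfdef, Fin.val_zero, if_true, Rew]
    · intro i hi
      have : i.val ≠ 0 := fun h => hi (Fin.ext (by simpa using h))
      simp [Rew, hfdef, this]
      exact fun h => absurd h hi
  -- OPT lower bound via allocation M 0 = T
  have hmem : ((T : ℝ) * (T + 1) / 2) / T ∈ S := by
    refine ⟨fun i => if i = 0 then T else 0, ?_, ?_⟩
    · simp
    · have : ∀ i : Fin k, Rew (f i) (if i = 0 then T else 0) =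
          if i = 0 then Rew g T else 0 := by
        intro i
        by_cases hi : i = 0
        · simp only [hi, if_true, hfdef, Fin.val_zero, Rew]
        · have hi' : i.val ≠ 0 := fun h => hi (Fin.ext (by simpa using h))
          simp [Rew, hfdef, hi', hi]
      rw [Finset.sum_congr rfl fun i _ => this i, Finset.sum_ite_eq' Finset.univ (0 : Fin k)]
      simp [hRewg T le_rfl]
  have hOPT : ((T : ℝ) * (T + 1) / 2) / T ≤ OPT f T := le_csSup hbdd hmem
  -- arithmetic
  set m : ℕ := T / k with hmdef
  have hTm : T = k * m := by
    rw [hmdef, Nat.mul_div_cancel' hdvd]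
  have hm1 : 1 ≤ m := by
    rw [hmdef]
    exact Nat.one_le_div_iff (by omega) |>.mpr hT
  have hmT : m ≤ T := hTm ▸ Nat.le_mul_of_pos_left m (by omega)
  rw [hfsum, hRewg m hmT]
  refine le_trans ?_ hOPT
  have hTcast : (T : ℝ) = (k : ℝ) * m := by exact_mod_cast hTm
  have hk2 : (2 : ℝ) ≤ k := by exact_mod_cast hk
  have hm1' : (1 : ℝ) ≤ m := by exact_mod_cast hm1
  rw [hTcast]
  have hk0 : (0:ℝ) < k := by linarith
  have hm0 : (0:ℝ) < m := by linarith
  have e1 : (k:ℝ)^2/2 * ((m:ℝ)*(m+1)/2/((k:ℝ)*m)) = (k:ℝ)*((m:ℝ)+1)/4 := by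
    field_simp
    ring
  have e2 : (k:ℝ)*m*((k:ℝ)*m+1)/2/((k:ℝ)*m) = ((k:ℝ)*m+1)/2 := by
    field_simp
  rw [e1, e2]
  have hkm : (k:ℝ)*1 ≤ (k:ℝ)*m := by
    exact mul_le_mul_of_nonneg_left hm1' (by linarith)
  linarith
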